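/- Let ε > 0 and k ≥ 1. Then there exists a constant C = C(ε, k) such that for all N, the integral over the region Γ_{k,N} = {(ξ_1,…,ξ_k) ∈ (ℝ²)^k : |ξ_ℓ| ≤ N for all ℓ} of ⟨ξ_1 + ⋯ + ξ_k⟩^{−ε} ∏_{ℓ=1}^k ⟨ξ_ℓ⟩^{−2} dξ_1⋯dξ_k is bounded by C, uniformly in N. -/

import Mathlib

open MeasureTheory

open MeasureTheory Set Real
open scoped ENNReal NNReal

noncomputable section

local notation "E2" => EuclideanSpace ℝ (Fin 2)

/-- weight `(1+‖x‖)^(-s)` as an `ℝ≥0∞`-valued function. -/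
def wgt (s : ℝ) (x : EuclideanSpace ℝ (Fin 2)) : ℝ≥0∞ :=
  ENNReal.ofReal ((1 + ‖x‖) ^ (-s))

lemma one_le_base (x : E2) : (1:ℝ) ≤ 1 + ‖x‖ := by
  have := norm_nonneg x; linarith

lemma wgt_meas (s : ℝ) : Measurable (wgt s) := by
  apply ENNReal.measurable_ofReal.comp
  have : Continuous fun x : E2 => (1 + ‖x‖) ^ (-s) := by
    apply Continuous.rpow_const (by continuity)
    intro x; left; positivity
  exact this.measurable

lemma wgt_mono {s t : ℝ} (h : s ≤ t) (x : E2) : wgt t x ≤ wgt s x := by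
  apply ENNReal.ofReal_le_ofReal
  exact Real.rpow_le_rpow_of_exponent_le (one_le_base x) (by linarith)

example : (Module.finrank ℝ E2) = 2 := finrank_euclideanSpace_fin

/-- `∫_{c}^{∞} t^p dt = c^(p+1)/(-(p+1))` for `p < -1`, as a lintegral. -/
lemma lint_Ioi_rpow {p : ℝ} (hp : p < -1) {c : ℝ} (hc : 0 < c) :
    ∫⁻ t in Ioi c, ENNReal.ofReal (t ^ p) = ENNReal.ofReal (c ^ (p+1) / (-(p+1))) := by
  rw [← ofReal_integral_eq_lintegral_ofReal (integrableOn_Ioi_rpow_of_lt hp hc)]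
  · rw [integral_Ioi_rpow_of_lt hp hc]
    congr 1
    rw [neg_div, div_neg]
  · filter_upwards [ae_restrict_mem measurableSet_Ioi] with t ht
    exact Real.rpow_nonneg (le_of_lt (hc.trans ht)) p

/-- `∫_0^c t^q dt = c^(q+1)/(q+1)` for `-1 < q`, as a lintegral. -/
lemma lint_Ioc_rpow {q : ℝ} (hq : -1 < q) {c : ℝ} (hc : 0 < c) :
    ∫⁻ t in Ioc 0 c, ENNReal.ofReal (t ^ q) = ENNReal.ofReal (c ^ (q+1) / (q+1)) := by
  have hint : IntegrableOn (fun t : ℝ => t ^ q) (Ioc 0 c) := by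
    rw [← intervalIntegrable_iff_integrableOn_Ioc_of_le hc.le]
    exact intervalIntegral.intervalIntegrable_rpow' hq
  rw [← ofReal_integral_eq_lintegral_ofReal hint]
  · congr 1
    have := integral_rpow (a := 0) (b := c) (Or.inl hq)
    rw [intervalIntegral.integral_of_le hc.le] at this
    rw [this, Real.zero_rpow (by linarith), sub_zero]
  · filter_upwards [ae_restrict_mem measurableSet_Ioc] with t ht
    exact Real.rpow_nonneg ht.1.le q

lemma setOf_norm_le_meas (R : ℝ) : MeasurableSet {x : E2 | ‖x‖ ≤ R} := by
  have : {x : E2 | ‖x‖ ≤ R} = Metric.closedBall 0 R := by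
    ext x; simp [Metric.mem_closedBall, dist_zero_right]
  rw [this]; exact measurableSet_closedBall

lemma rpow_sq_helper {t : ℝ} (ht : 0 ≤ t) (a : ℝ) : t ^ (a * 2) = (t ^ a) ^ 2 := by
  rw [Real.rpow_mul ht]
  norm_num

lemma ball_est {α : ℝ} (h0 : 0 < α) (h2 : α < 2) :
    ∃ C : ℝ≥0∞, C < ⊤ ∧ ∀ R : ℝ, 0 ≤ R →
      ∫⁻ x in {x : E2 | ‖x‖ ≤ R}, wgt α x ≤ C * ENNReal.ofReal ((1 + R) ^ (2 - α)) := by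
  have hαne : α ≠ 0 := ne_of_gt h0
  set B1 := volume (Metric.ball (0:E2) 1) with hB1def
  have hB1 : B1 < ⊤ := measure_ball_lt_top
  refine ⟨ENNReal.ofReal (1 + 1 / (2/α - 1)) * B1,
    ENNReal.mul_lt_top ENNReal.ofReal_lt_top hB1, ?_⟩
  intro R hR
  have h1R : (0:ℝ) < 1 + R := by linarith
  set t₀ : ℝ := (1 + R) ^ (-α) with ht₀def
  have ht₀ : 0 < t₀ := Real.rpow_pos_of_pos h1R _
  set μ := volume.restrict {x : E2 | ‖x‖ ≤ R} with hμdef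
  have hfm : Measurable fun x : E2 => (1 + ‖x‖) ^ (-α) := by fun_prop
  have layer : ∫⁻ x in {x : E2 | ‖x‖ ≤ R}, wgt α x
      = ∫⁻ t in Ioi (0:ℝ), μ {a : E2 | t ≤ (1 + ‖a‖) ^ (-α)} := by
    simp only [wgt]
    exact lintegral_eq_lintegral_meas_le μ
      (Filter.Eventually.of_forall fun x => by positivity) hfm.aemeasurable
  have key : ∀ t ∈ Ioi (0:ℝ), μ {a : E2 | t ≤ (1 + ‖a‖) ^ (-α)}
      ≤ ENNReal.ofReal (min ((t ^ (-α⁻¹)) ^ 2) ((1+R) ^ 2)) * B1 := by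
    intro t ht
    have hA : {a : E2 | t ≤ (1 + ‖a‖) ^ (-α)} = Metric.closedBall 0 (t ^ (-α⁻¹) - 1) := by
      ext a; simp only [mem_setOf_eq, Metric.mem_closedBall, dist_zero_right]
      exact le_rpow_one_add_norm_iff_norm_le h0 (mem_Ioi.mp ht) a
    rcases le_total ((t ^ (-α⁻¹)) ^ 2) ((1+R) ^ 2) with hmin | hmin
    · have hle : μ {a : E2 | t ≤ (1 + ‖a‖) ^ (-α)}
          ≤ volume (Metric.closedBall (0:E2) (t ^ (-α⁻¹) - 1)) := by
        rw [hA, hμdef, Measure.restrict_apply measurableSet_closedBall]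
        exact measure_mono inter_subset_left
      refine hle.trans ?_
      rw [min_eq_left hmin]
      rcases le_or_gt 0 (t ^ (-α⁻¹) - 1) with hr | hr
      · rw [Measure.addHaar_closedBall _ _ hr, finrank_euclideanSpace_fin]
        have hsq : (t ^ (-α⁻¹) - 1) ^ 2 ≤ (t ^ (-α⁻¹)) ^ 2 := by
          apply pow_le_pow_left₀ hr; linarith
        exact mul_le_mul' (ENNReal.ofReal_le_ofReal hsq) le_rfl
      · rw [Metric.closedBall_eq_empty.mpr hr]
        simp
    · have hle : μ {a : E2 | t ≤ (1 + ‖a‖) ^ (-α)} ≤ volume (Metric.closedBall (0:E2) R) := by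
        rw [hμdef, Measure.restrict_apply (hA ▸ measurableSet_closedBall)]
        refine measure_mono (inter_subset_right.trans ?_)
        intro x hx; simpa [Metric.mem_closedBall, dist_zero_right] using hx
      refine hle.trans ?_
      rw [min_eq_right hmin, Measure.addHaar_closedBall _ _ hR, finrank_euclideanSpace_fin]
      have hsq : R ^ 2 ≤ (1+R) ^ 2 := by apply pow_le_pow_left₀ hR; linarith
      exact mul_le_mul' (ENNReal.ofReal_le_ofReal hsq) le_rfl
  have hFm : Measurable fun t : ℝ =>
      ENNReal.ofReal (min ((t ^ (-α⁻¹)) ^ 2) ((1+R) ^ 2)) := by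
    apply ENNReal.measurable_ofReal.comp
    apply Measurable.min _ measurable_const
    fun_prop
  have hd : (0:ℝ) < 2/α - 1 := by
    rw [sub_pos, lt_div_iff₀ h0]; linarith
  have hp : -α⁻¹ * 2 < -1 := by
    rw [neg_mul, neg_lt_neg_iff, show α⁻¹ * 2 = 2 / α by ring, lt_div_iff₀ h0]; linarith
  have piece1 : ∫⁻ t in Ioc (0:ℝ) t₀, ENNReal.ofReal (min ((t ^ (-α⁻¹)) ^ 2) ((1+R) ^ 2))
      ≤ ENNReal.ofReal ((1+R) ^ (2-α)) := by
    calc ∫⁻ t in Ioc (0:ℝ) t₀, ENNReal.ofReal (min ((t ^ (-α⁻¹)) ^ 2) ((1+R) ^ 2))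
        ≤ ∫⁻ _ in Ioc (0:ℝ) t₀, ENNReal.ofReal ((1+R) ^ 2) := by
          apply setLIntegral_mono' measurableSet_Ioc
          intro t _
          exact ENNReal.ofReal_le_ofReal (min_le_right _ _)
      _ = ENNReal.ofReal ((1+R) ^ 2) * ENNReal.ofReal t₀ := by
          rw [setLIntegral_const, Real.volume_Ioc, sub_zero]
      _ = ENNReal.ofReal ((1+R) ^ 2 * (1+R) ^ (-α)) := by
          rw [ENNReal.ofReal_mul (by positivity)]
      _ = ENNReal.ofReal ((1+R) ^ (2-α)) := by
          congr 1
          rw [← Real.rpow_natCast (1+R) 2, ← Real.rpow_add h1R]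
          norm_num [sub_eq_add_neg]
  have piece2 : ∫⁻ t in Ioi t₀, ENNReal.ofReal (min ((t ^ (-α⁻¹)) ^ 2) ((1+R) ^ 2))
      ≤ ENNReal.ofReal ((1+R) ^ (2-α) * (1/(2/α - 1))) := by
    have hcong : ∫⁻ t in Ioi t₀, ENNReal.ofReal (min ((t ^ (-α⁻¹)) ^ 2) ((1+R) ^ 2))
        ≤ ∫⁻ t in Ioi t₀, ENNReal.ofReal (t ^ (-α⁻¹ * 2)) := by
      apply setLIntegral_mono' measurableSet_Ioi
      intro t ht
      apply ENNReal.ofReal_le_ofReal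
      refine (min_le_left _ _).trans_eq ?_
      rw [rpow_sq_helper (ht₀.trans ht).le]
    refine hcong.trans ?_
    rw [lint_Ioi_rpow hp ht₀]
    apply ENNReal.ofReal_le_ofReal
    apply le_of_eq
    have e1 : -α * (-α⁻¹ * 2 + 1) = 2 - α := by field_simp; ring
    have e2 : -(-α⁻¹ * 2 + 1) = 2/α - 1 := by field_simp; ring
    rw [ht₀def, ← Real.rpow_mul h1R.le, e1, e2, div_eq_mul_one_div]
  calc ∫⁻ x in {x : E2 | ‖x‖ ≤ R}, wgt α x
      = ∫⁻ t in Ioi (0:ℝ), μ {a : E2 | t ≤ (1 + ‖a‖) ^ (-α)} := layer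
    _ ≤ ∫⁻ t in Ioi (0:ℝ),
          ENNReal.ofReal (min ((t ^ (-α⁻¹)) ^ 2) ((1+R) ^ 2)) * B1 :=
        setLIntegral_mono' measurableSet_Ioi key
    _ = (∫⁻ t in Ioi (0:ℝ), ENNReal.ofReal (min ((t ^ (-α⁻¹)) ^ 2) ((1+R) ^ 2))) * B1 :=
        lintegral_mul_const _ hFm
    _ ≤ ((∫⁻ t in Ioc (0:ℝ) t₀, ENNReal.ofReal (min ((t ^ (-α⁻¹)) ^ 2) ((1+R) ^ 2)))
          + ∫⁻ t in Ioi t₀, ENNReal.ofReal (min ((t ^ (-α⁻¹)) ^ 2) ((1+R) ^ 2))) * B1 := by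
        apply mul_le_mul' _ le_rfl
        rw [← Ioc_union_Ioi_eq_Ioi ht₀.le]
        exact lintegral_union_le _ _ _
    _ ≤ (ENNReal.ofReal ((1+R) ^ (2-α)) + ENNReal.ofReal ((1+R) ^ (2-α) * (1/(2/α - 1)))) * B1 :=
        mul_le_mul' (add_le_add piece1 piece2) le_rfl
    _ = ENNReal.ofReal (1 + 1 / (2/α - 1)) * B1 * ENNReal.ofReal ((1 + R) ^ (2 - α)) := by
        rw [← ENNReal.ofReal_add (by positivity) (by positivity),
          show (1 + R) ^ (2 - α) + (1 + R) ^ (2 - α) * (1 / (2 / α - 1))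
              = (1 + 1 / (2/α - 1)) * (1 + R) ^ (2 - α) by ring,
          ENNReal.ofReal_mul (by positivity), mul_right_comm]

lemma tail_est {γ : ℝ} (h2 : 2 < γ) :
    ∃ C : ℝ≥0∞, C < ⊤ ∧ ∀ R : ℝ, 0 ≤ R →
      ∫⁻ x in {x : E2 | R ≤ ‖x‖}, wgt γ x ≤ C * ENNReal.ofReal ((1 + R) ^ (2 - γ)) := by
  have h0 : (0:ℝ) < γ := by linarith
  have hγne : γ ≠ 0 := ne_of_gt h0
  set B1 := volume (Metric.ball (0:E2) 1) with hB1def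
  have hB1 : B1 < ⊤ := measure_ball_lt_top
  refine ⟨ENNReal.ofReal (1 / (1 - 2/γ)) * B1,
    ENNReal.mul_lt_top ENNReal.ofReal_lt_top hB1, ?_⟩
  intro R hR
  have h1R : (0:ℝ) < 1 + R := by linarith
  set t₀ : ℝ := (1 + R) ^ (-γ) with ht₀def
  have ht₀ : 0 < t₀ := Real.rpow_pos_of_pos h1R _
  have hSm : MeasurableSet {x : E2 | R ≤ ‖x‖} := by
    have : Continuous fun x : E2 => ‖x‖ := by continuity
    exact measurableSet_le measurable_const this.measurable
  set μ := volume.restrict {x : E2 | R ≤ ‖x‖} with hμdef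
  have hfm : Measurable fun x : E2 => (1 + ‖x‖) ^ (-γ) := by fun_prop
  have layer : ∫⁻ x in {x : E2 | R ≤ ‖x‖}, wgt γ x
      = ∫⁻ t in Ioi (0:ℝ), μ {a : E2 | t ≤ (1 + ‖a‖) ^ (-γ)} := by
    simp only [wgt]
    exact lintegral_eq_lintegral_meas_le μ
      (Filter.Eventually.of_forall fun x => by positivity) hfm.aemeasurable
  have hA : ∀ t : ℝ, 0 < t →
      {a : E2 | t ≤ (1 + ‖a‖) ^ (-γ)} = Metric.closedBall 0 (t ^ (-γ⁻¹) - 1) := by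
    intro t ht
    ext a; simp only [mem_setOf_eq, Metric.mem_closedBall, dist_zero_right]
    exact le_rpow_one_add_norm_iff_norm_le h0 ht a
  have hq : (-1:ℝ) < -γ⁻¹ * 2 := by
    rw [neg_mul, neg_lt_neg_iff, show γ⁻¹ * 2 = 2 / γ by ring, div_lt_iff₀ h0]; linarith
  have hq1 : (0:ℝ) < -γ⁻¹ * 2 + 1 := by
    have := hq; linarith
  have piece1 : ∫⁻ t in Ioc (0:ℝ) t₀, μ {a : E2 | t ≤ (1 + ‖a‖) ^ (-γ)}
      ≤ ENNReal.ofReal ((1+R) ^ (2-γ) / (1 - 2/γ)) * B1 := by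
    have hb : ∀ t ∈ Ioc (0:ℝ) t₀, μ {a : E2 | t ≤ (1 + ‖a‖) ^ (-γ)}
        ≤ ENNReal.ofReal (t ^ (-γ⁻¹ * 2)) * B1 := by
      intro t ht
      have hle : μ {a : E2 | t ≤ (1 + ‖a‖) ^ (-γ)}
          ≤ volume (Metric.closedBall (0:E2) (t ^ (-γ⁻¹) - 1)) := by
        rw [hA t ht.1, hμdef, Measure.restrict_apply measurableSet_closedBall]
        exact measure_mono inter_subset_left
      refine hle.trans ?_
      rcases le_or_gt 0 (t ^ (-γ⁻¹) - 1) with hr | hr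
      · rw [Measure.addHaar_closedBall _ _ hr, finrank_euclideanSpace_fin]
        refine mul_le_mul' (ENNReal.ofReal_le_ofReal ?_) le_rfl
        rw [rpow_sq_helper ht.1.le]
        apply pow_le_pow_left₀ hr; linarith
      · rw [Metric.closedBall_eq_empty.mpr hr]; simp
    calc ∫⁻ t in Ioc (0:ℝ) t₀, μ {a : E2 | t ≤ (1 + ‖a‖) ^ (-γ)}
        ≤ ∫⁻ t in Ioc (0:ℝ) t₀, ENNReal.ofReal (t ^ (-γ⁻¹ * 2)) * B1 :=
          setLIntegral_mono' measurableSet_Ioc hb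
      _ = (∫⁻ t in Ioc (0:ℝ) t₀, ENNReal.ofReal (t ^ (-γ⁻¹ * 2))) * B1 := by
          apply lintegral_mul_const
          apply ENNReal.measurable_ofReal.comp; fun_prop
      _ = ENNReal.ofReal (t₀ ^ (-γ⁻¹ * 2 + 1) / (-γ⁻¹ * 2 + 1)) * B1 := by
          rw [lint_Ioc_rpow hq ht₀]
      _ = ENNReal.ofReal ((1+R) ^ (2-γ) / (1 - 2/γ)) * B1 := by
          rw [ht₀def, ← Real.rpow_mul h1R.le,
            show -γ * (-γ⁻¹ * 2 + 1) = 2 - γ by field_simp; ring,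
            show -γ⁻¹ * 2 + 1 = 1 - 2/γ by rw [div_eq_mul_inv]; ring]
  have piece2 : ∫⁻ t in Ioi t₀, μ {a : E2 | t ≤ (1 + ‖a‖) ^ (-γ)} = 0 := by
    have hz : ∀ t ∈ Ioi t₀, μ {a : E2 | t ≤ (1 + ‖a‖) ^ (-γ)} = 0 := by
      intro t ht
      have htpos : (0:ℝ) < t := ht₀.trans ht
      rw [hA t htpos, hμdef, Measure.restrict_apply measurableSet_closedBall]
      have hemp : Metric.closedBall (0:E2) (t ^ (-γ⁻¹) - 1) ∩ {x : E2 | R ≤ ‖x‖} = ∅ := by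
        rw [eq_empty_iff_forall_notMem]
        rintro x ⟨hx1, hx2⟩
        rw [Metric.mem_closedBall, dist_zero_right] at hx1
        have hlt : t ^ (-γ⁻¹) < t₀ ^ (-γ⁻¹) :=
          Real.rpow_lt_rpow_of_neg ht₀ ht (by simp [h0, inv_pos])
        have ht₀v : t₀ ^ (-γ⁻¹) = 1 + R := by
          rw [ht₀def, ← Real.rpow_mul h1R.le,
            show -γ * -γ⁻¹ = 1 by field_simp]
          exact Real.rpow_one _
        rw [ht₀v] at hlt
        have hx2' : R ≤ ‖x‖ := hx2
        linarith
      rw [hemp, measure_empty]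
    refine le_antisymm ?_ zero_le
    refine le_trans (setLIntegral_mono' measurableSet_Ioi
      (fun t ht => le_of_eq (hz t ht))) ?_
    simp
  calc ∫⁻ x in {x : E2 | R ≤ ‖x‖}, wgt γ x
      = ∫⁻ t in Ioi (0:ℝ), μ {a : E2 | t ≤ (1 + ‖a‖) ^ (-γ)} := layer
    _ ≤ (∫⁻ t in Ioc (0:ℝ) t₀, μ {a : E2 | t ≤ (1 + ‖a‖) ^ (-γ)})
          + ∫⁻ t in Ioi t₀, μ {a : E2 | t ≤ (1 + ‖a‖) ^ (-γ)} := by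
        rw [← Ioc_union_Ioi_eq_Ioi ht₀.le]
        exact lintegral_union_le _ _ _
    _ ≤ ENNReal.ofReal ((1+R) ^ (2-γ) / (1 - 2/γ)) * B1 + 0 := by
        rw [piece2]; exact add_le_add piece1 le_rfl
    _ = ENNReal.ofReal (1 / (1 - 2/γ)) * B1 * ENNReal.ofReal ((1 + R) ^ (2 - γ)) := by
        have hpos : (0:ℝ) < 1 - 2/γ := by
          rw [sub_pos, div_lt_iff₀ h0]; linarith
        rw [add_zero, mul_right_comm]
        congr 1
        rw [← ENNReal.ofReal_mul (one_div_nonneg.mpr hpos.le)]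
        congr 1
        rw [div_eq_mul_one_div]
        ring

lemma rpow_neg_base_le {a b s : ℝ} (ha : 0 < a) (hab : a ≤ b) (hs : 0 ≤ s) :
    b ^ (-s) ≤ a ^ (-s) := by
  rw [Real.rpow_neg (ha.trans_le hab).le, Real.rpow_neg ha.le]
  have h1 : (0:ℝ) < a ^ s := Real.rpow_pos_of_pos ha s
  have h2 : a ^ s ≤ b ^ s := Real.rpow_le_rpow ha.le hab hs
  exact inv_anti₀ h1 h2

lemma wgt_compare {s : ℝ} (hs : 0 ≤ s) {c : ℝ} (hc : 0 < c) (y z : E2)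
    (h : 1 + ‖y‖ ≤ c * (1 + ‖z‖)) : wgt s z ≤ ENNReal.ofReal (c ^ s) * wgt s y := by
  rw [wgt, wgt, ← ENNReal.ofReal_mul (by positivity)]
  apply ENNReal.ofReal_le_ofReal
  have h1y : (0:ℝ) < 1 + ‖y‖ := by positivity
  have h1z : (0:ℝ) < 1 + ‖z‖ := by positivity
  have hbase : (1 + ‖y‖)/c ≤ 1 + ‖z‖ := by
    rw [div_le_iff₀ hc, mul_comm]; exact h
  calc (1+‖z‖)^(-s) ≤ ((1+‖y‖)/c)^(-s) :=
        rpow_neg_base_le (by positivity) hbase hs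
    _ = c^s * (1+‖y‖)^(-s) := by
        rw [Real.div_rpow h1y.le hc.le, Real.rpow_neg hc.le, div_eq_mul_inv, inv_inv,
          mul_comm]

lemma wgt_mul (a b : ℝ) (x : E2) : wgt a x * wgt b x = wgt (a+b) x := by
  rw [wgt, wgt, wgt, ← ENNReal.ofReal_mul (by positivity),
    ← Real.rpow_add (by positivity), neg_add]

lemma wgt_mul_rpow (β c : ℝ) (η : E2) :
    wgt β η * ENNReal.ofReal ((1+‖η‖)^c) = ENNReal.ofReal ((1+‖η‖)^(c - β)) := by
  rw [wgt, ← ENNReal.ofReal_mul (by positivity), ← Real.rpow_add (by positivity)]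
  congr 1
  ring

lemma norm_le_meas (c : ℝ) (f : E2 → ℝ) (hf : Continuous f) :
    MeasurableSet {x : E2 | f x ≤ c} :=
  measurableSet_le hf.measurable measurable_const

lemma conv_est {α β : ℝ} (hα0 : 0 < α) (hα2 : α < 2) (hβ0 : 0 < β) (hβ2 : β < 2)
    (hs : 2 < α + β) :
    ∃ C : ℝ≥0∞, C < ⊤ ∧ ∀ η : E2,
      ∫⁻ x, wgt α x * wgt β (η + x) ≤ C * ENNReal.ofReal ((1 + ‖η‖) ^ (2 - (α+β))) := by
  obtain ⟨Ca, hCa, hball_a⟩ := ball_est hα0 hα2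
  obtain ⟨Cb, hCb, hball_b⟩ := ball_est hβ0 hβ2
  obtain ⟨Ct, hCt, htail⟩ := tail_est hs
  refine ⟨ENNReal.ofReal (2^β) * Ca + ENNReal.ofReal (2^α * 3^(2-β)) * Cb
      + ENNReal.ofReal (2^β) * Ct, ?_, ?_⟩
  · refine ENNReal.add_lt_top.mpr ⟨ENNReal.add_lt_top.mpr ⟨?_, ?_⟩, ?_⟩
    · exact ENNReal.mul_lt_top ENNReal.ofReal_lt_top hCa
    · exact ENNReal.mul_lt_top ENNReal.ofReal_lt_top hCb
    · exact ENNReal.mul_lt_top ENNReal.ofReal_lt_top hCt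
  intro η
  have h1η : (0:ℝ) < 1 + ‖η‖ := by positivity
  set S1 : Set E2 := {x | ‖x‖ ≤ ‖η‖/2} with hS1def
  set T : Set E2 := {x | ‖η‖/2 ≤ ‖x‖ ∧ ‖x‖ ≤ 2*‖η‖} with hTdef
  set S4 : Set E2 := {x | 2*‖η‖ ≤ ‖x‖} with hS4def
  have hS1m : MeasurableSet S1 := norm_le_meas (‖η‖/2) (fun x => ‖x‖) continuous_norm
  have hTm : MeasurableSet T := by
    have h1 : MeasurableSet {x : E2 | ‖η‖/2 ≤ ‖x‖} :=
      measurableSet_le measurable_const measurable_norm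
    have h2 : MeasurableSet {x : E2 | ‖x‖ ≤ 2*‖η‖} := norm_le_meas (2*‖η‖) (fun x => ‖x‖) continuous_norm
    exact h1.inter h2
  have hS4m : MeasurableSet S4 :=
    measurableSet_le measurable_const measurable_norm
  have hcover : (univ : Set E2) ⊆ S1 ∪ T ∪ S4 := by
    intro x _
    rcases le_total ‖x‖ (‖η‖/2) with h | h
    · exact Or.inl (Or.inl h)
    rcases le_total ‖x‖ (2*‖η‖) with h' | h'
    · exact Or.inl (Or.inr ⟨h, h'⟩)
    · exact Or.inr h'
  have hmeas_wb : Measurable fun x : E2 => wgt β (η + x) :=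
    (wgt_meas β).comp (measurable_const.add measurable_id)
  -- Piece on S1
  have hP1 : ∫⁻ x in S1, wgt α x * wgt β (η + x)
      ≤ ENNReal.ofReal (2^β) * Ca * ENNReal.ofReal ((1 + ‖η‖) ^ (2 - (α+β))) := by
    have hb : ∀ x ∈ S1, wgt α x * wgt β (η + x)
        ≤ wgt α x * (ENNReal.ofReal (2^β) * wgt β η) := by
      intro x hx
      apply mul_le_mul' le_rfl
      apply wgt_compare hβ0.le two_pos
      have h1 : ‖η‖ ≤ ‖η + x‖ + ‖x‖ := by
        have := norm_add_le (η + x) (-x)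
        simpa using this
      have hx' : ‖x‖ ≤ ‖η‖/2 := hx
      have : ‖η‖/2 ≤ ‖η + x‖ := by linarith
      linarith
    calc ∫⁻ x in S1, wgt α x * wgt β (η + x)
        ≤ ∫⁻ x in S1, wgt α x * (ENNReal.ofReal (2^β) * wgt β η) :=
          setLIntegral_mono' hS1m hb
      _ = (∫⁻ x in S1, wgt α x) * (ENNReal.ofReal (2^β) * wgt β η) :=
          lintegral_mul_const _ (wgt_meas α)
      _ ≤ Ca * ENNReal.ofReal ((1 + ‖η‖/2) ^ (2-α)) * (ENNReal.ofReal (2^β) * wgt β η) := by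
          apply mul_le_mul' _ le_rfl
          exact hball_a (‖η‖/2) (by positivity)
      _ ≤ Ca * ENNReal.ofReal ((1 + ‖η‖) ^ (2-α)) * (ENNReal.ofReal (2^β) * wgt β η) := by
          apply mul_le_mul' (mul_le_mul' le_rfl (ENNReal.ofReal_le_ofReal ?_)) le_rfl
          apply Real.rpow_le_rpow (by positivity) (by linarith [norm_nonneg η]) (by linarith)
      _ = ENNReal.ofReal (2^β) * Ca * (wgt β η * ENNReal.ofReal ((1 + ‖η‖) ^ (2-α))) := by
          ring
      _ = ENNReal.ofReal (2^β) * Ca * ENNReal.ofReal ((1 + ‖η‖) ^ (2 - (α+β))) := by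
          rw [wgt_mul_rpow]
          congr 2
          ring
  -- Piece on T
  have hP2 : ∫⁻ x in T, wgt α x * wgt β (η + x)
      ≤ ENNReal.ofReal (2^α * 3^(2-β)) * Cb * ENNReal.ofReal ((1 + ‖η‖) ^ (2 - (α+β))) := by
    have hb : ∀ x ∈ T, wgt α x * wgt β (η + x)
        ≤ (ENNReal.ofReal (2^α) * wgt α η) * wgt β (η + x) := by
      intro x hx
      apply mul_le_mul' _ le_rfl
      apply wgt_compare hα0.le two_pos
      have hx' : ‖η‖/2 ≤ ‖x‖ := hx.1
      linarith
    have htrans : ∫⁻ x in T, wgt β (η + x) ≤ Cb * ENNReal.ofReal ((1 + 3*‖η‖) ^ (2-β)) := by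
      have hsub : T ⊆ {x : E2 | ‖η + x‖ ≤ 3*‖η‖} := by
        intro x hx
        have := norm_add_le η x
        have hx' : ‖x‖ ≤ 2*‖η‖ := hx.2
        simp only [mem_setOf_eq]
        linarith
      refine le_trans (lintegral_mono_set hsub) ?_
      have hkey : ∫⁻ x in {x : E2 | ‖η + x‖ ≤ 3*‖η‖}, wgt β (η + x)
          = ∫⁻ y in {y : E2 | ‖y‖ ≤ 3*‖η‖}, wgt β y := by
        have hind := lintegral_add_left_eq_self (μ := (volume : Measure E2))
          (fun y => Set.indicator {y : E2 | ‖y‖ ≤ 3*‖η‖} (wgt β) y) η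
        have hSm' : MeasurableSet {y : E2 | ‖y‖ ≤ 3*‖η‖} :=
          norm_le_meas (3*‖η‖) (fun y => ‖y‖) continuous_norm
        have hpre : MeasurableSet {x : E2 | ‖η + x‖ ≤ 3*‖η‖} :=
          norm_le_meas (3*‖η‖) (fun x => ‖η + x‖) ((continuous_const.add continuous_id).norm)
        calc ∫⁻ x in {x : E2 | ‖η + x‖ ≤ 3*‖η‖}, wgt β (η + x)
            = ∫⁻ x, Set.indicator {y : E2 | ‖y‖ ≤ 3*‖η‖} (wgt β) (η + x) := by
              rw [← lintegral_indicator hpre]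
              congr 1
          _ = ∫⁻ y, Set.indicator {y : E2 | ‖y‖ ≤ 3*‖η‖} (wgt β) y := hind
          _ = ∫⁻ y in {y : E2 | ‖y‖ ≤ 3*‖η‖}, wgt β y := lintegral_indicator hSm' _
      rw [hkey]
      exact hball_b (3*‖η‖) (by positivity)
    calc ∫⁻ x in T, wgt α x * wgt β (η + x)
        ≤ ∫⁻ x in T, (ENNReal.ofReal (2^α) * wgt α η) * wgt β (η + x) :=
          setLIntegral_mono' hTm hb
      _ = (ENNReal.ofReal (2^α) * wgt α η) * ∫⁻ x in T, wgt β (η + x) :=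
          lintegral_const_mul _ hmeas_wb
      _ ≤ (ENNReal.ofReal (2^α) * wgt α η) * (Cb * ENNReal.ofReal ((1 + 3*‖η‖) ^ (2-β))) :=
          mul_le_mul' le_rfl htrans
      _ ≤ (ENNReal.ofReal (2^α) * wgt α η) * (Cb * ENNReal.ofReal ((3*(1 + ‖η‖)) ^ (2-β))) := by
          apply mul_le_mul' le_rfl (mul_le_mul' le_rfl (ENNReal.ofReal_le_ofReal ?_))
          apply Real.rpow_le_rpow (by positivity) (by linarith [norm_nonneg η]) (by linarith)
      _ = ENNReal.ofReal (2^α * 3^(2-β)) * Cb * (wgt α η * ENNReal.ofReal ((1 + ‖η‖) ^ (2-β))) := by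
          rw [Real.mul_rpow (by norm_num) h1η.le,
            ENNReal.ofReal_mul (by positivity), ENNReal.ofReal_mul (by positivity)]
          ring
      _ = ENNReal.ofReal (2^α * 3^(2-β)) * Cb * ENNReal.ofReal ((1 + ‖η‖) ^ (2 - (α+β))) := by
          rw [wgt_mul_rpow]
          congr 2
          ring
  -- Piece on S4
  have hP3 : ∫⁻ x in S4, wgt α x * wgt β (η + x)
      ≤ ENNReal.ofReal (2^β) * Ct * ENNReal.ofReal ((1 + ‖η‖) ^ (2 - (α+β))) := by
    have hb : ∀ x ∈ S4, wgt α x * wgt β (η + x)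
        ≤ ENNReal.ofReal (2^β) * wgt (α+β) x := by
      intro x hx
      have hx' : 2*‖η‖ ≤ ‖x‖ := hx
      have hcmp : wgt β (η + x) ≤ ENNReal.ofReal (2^β) * wgt β x := by
        apply wgt_compare hβ0.le two_pos
        have h1 : ‖x‖ ≤ ‖η + x‖ + ‖η‖ := by
          have := norm_add_le (η + x) (-η)
          simpa [add_comm] using this
        have h2 : ‖η‖ ≤ ‖x‖/2 := by linarith
        have : ‖x‖/2 ≤ ‖η + x‖ := by linarith
        linarith
      calc wgt α x * wgt β (η + x) ≤ wgt α x * (ENNReal.ofReal (2^β) * wgt β x) :=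
            mul_le_mul' le_rfl hcmp
        _ = ENNReal.ofReal (2^β) * (wgt α x * wgt β x) := by ring
        _ = ENNReal.ofReal (2^β) * wgt (α+β) x := by rw [wgt_mul]
    calc ∫⁻ x in S4, wgt α x * wgt β (η + x)
        ≤ ∫⁻ x in S4, ENNReal.ofReal (2^β) * wgt (α+β) x := setLIntegral_mono' hS4m hb
      _ = ENNReal.ofReal (2^β) * ∫⁻ x in S4, wgt (α+β) x :=
          lintegral_const_mul _ (wgt_meas _)
      _ ≤ ENNReal.ofReal (2^β) * (Ct * ENNReal.ofReal ((1 + 2*‖η‖) ^ (2 - (α+β)))) := by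
          apply mul_le_mul' le_rfl
          exact htail (2*‖η‖) (by positivity)
      _ ≤ ENNReal.ofReal (2^β) * (Ct * ENNReal.ofReal ((1 + ‖η‖) ^ (2 - (α+β)))) := by
          apply mul_le_mul' le_rfl (mul_le_mul' le_rfl (ENNReal.ofReal_le_ofReal ?_))
          rw [show (2:ℝ) - (α+β) = -((α+β) - 2) by ring]
          apply rpow_neg_base_le h1η (by linarith [norm_nonneg η]) (by linarith)
      _ = ENNReal.ofReal (2^β) * Ct * ENNReal.ofReal ((1 + ‖η‖) ^ (2 - (α+β))) := by ring
  calc ∫⁻ x, wgt α x * wgt β (η + x)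
      = ∫⁻ x in (univ : Set E2), wgt α x * wgt β (η + x) := by rw [setLIntegral_univ]
    _ ≤ ∫⁻ x in S1 ∪ T ∪ S4, wgt α x * wgt β (η + x) := lintegral_mono_set hcover
    _ ≤ (∫⁻ x in S1 ∪ T, wgt α x * wgt β (η + x)) + ∫⁻ x in S4, wgt α x * wgt β (η + x) :=
        lintegral_union_le _ _ _
    _ ≤ ((∫⁻ x in S1, wgt α x * wgt β (η + x)) + ∫⁻ x in T, wgt α x * wgt β (η + x))
          + ∫⁻ x in S4, wgt α x * wgt β (η + x) :=
        add_le_add (lintegral_union_le _ _ _) le_rfl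
    _ ≤ (ENNReal.ofReal (2^β) * Ca * ENNReal.ofReal ((1 + ‖η‖) ^ (2 - (α+β)))
          + ENNReal.ofReal (2^α * 3^(2-β)) * Cb * ENNReal.ofReal ((1 + ‖η‖) ^ (2 - (α+β))))
          + ENNReal.ofReal (2^β) * Ct * ENNReal.ofReal ((1 + ‖η‖) ^ (2 - (α+β))) :=
        add_le_add (add_le_add hP1 hP2) hP3
    _ = (ENNReal.ofReal (2^β) * Ca + ENNReal.ofReal (2^α * 3^(2-β)) * Cb
          + ENNReal.ofReal (2^β) * Ct) * ENNReal.ofReal ((1 + ‖η‖) ^ (2 - (α+β))) := by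
        ring

lemma msum_meas (m : ℕ) : Measurable fun y : Fin m → E2 => ∑ j, y j :=
  Finset.measurable_sum Finset.univ (fun j _ => measurable_pi_apply j)

lemma mprod_meas (m : ℕ) (s : ℝ) : Measurable fun y : Fin m → E2 => ∏ j, wgt s (y j) :=
  Finset.measurable_prod Finset.univ
    (fun j _ => (wgt_meas s).comp (measurable_pi_apply j))

lemma multi_est : ∀ (m : ℕ) (b : ℝ), 0 < b → b < 2 →
    ∃ b' : ℝ, 0 < b' ∧ b' < 2 ∧ ∃ C : ℝ≥0∞, C < ⊤ ∧ ∀ η : E2,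
      ∫⁻ ξ : Fin m → E2, wgt b (η + ∑ ℓ, ξ ℓ) * ∏ ℓ, wgt 2 (ξ ℓ) ≤ C * wgt b' η := by
  intro m
  induction m with
  | zero =>
    intro b hb0 hb2
    refine ⟨b, hb0, hb2, 1, ENNReal.one_lt_top, fun η => ?_⟩
    have : ∀ ξ : Fin 0 → E2, wgt b (η + ∑ ℓ, ξ ℓ) * ∏ ℓ, wgt 2 (ξ ℓ) = wgt b η := by
      intro ξ
      simp
    rw [lintegral_congr this, lintegral_const]
    have : (volume : Measure (Fin 0 → E2)) Set.univ = 1 := by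
      rw [volume_pi, Measure.pi_univ]
      simp
    rw [this, mul_one, one_mul]
  | succ m IH =>
    intro b hb0 hb2
    obtain ⟨b', hb'0, hb'2, C, hC, hIH⟩ := IH b hb0 hb2
    set α : ℝ := 2 - b'/2 with hαdef
    have hα0 : 0 < α := by simp only [hαdef]; linarith
    have hα2 : α < 2 := by simp only [hαdef]; linarith
    have hαβ : 2 < α + b' := by simp only [hαdef]; linarith
    obtain ⟨Cc, hCc, hconv⟩ := conv_est hα0 hα2 hb'0 hb'2 hαβ
    refine ⟨b'/2, by linarith, by linarith, C * Cc, ENNReal.mul_lt_top hC hCc, fun η => ?_⟩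
    -- the inner integrand in product form
    set G : E2 × (Fin m → E2) → ℝ≥0∞ :=
      fun p => wgt b (η + p.1 + ∑ j, p.2 j) * (wgt 2 p.1 * ∏ j, wgt 2 (p.2 j)) with hGdef
    have hGmeas : Measurable G := by
      apply Measurable.mul
      · exact (wgt_meas b).comp
          (((measurable_const.add measurable_fst).add
            ((msum_meas m).comp measurable_snd)))
      · exact ((wgt_meas 2).comp measurable_fst).mul ((mprod_meas m 2).comp measurable_snd)
    have step1 : ∫⁻ ξ : Fin (m+1) → E2, wgt b (η + ∑ ℓ, ξ ℓ) * ∏ ℓ, wgt 2 (ξ ℓ)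
        = ∫⁻ p, G p ∂((volume : Measure E2).prod (Measure.pi fun _ : Fin m => volume)) := by
      have hmp := measurePreserving_piFinSuccAbove (fun _ : Fin (m+1) => (volume : Measure E2)) 0
      have hemb := (MeasurableEquiv.piFinSuccAbove (fun _ : Fin (m+1) => E2) 0).measurableEmbedding
      rw [volume_pi]
      rw [← MeasurePreserving.lintegral_comp_emb hmp hemb G]
      congr 1
      ext ξ
      simp only [hGdef, MeasurableEquiv.piFinSuccAbove_apply, Fin.insertNthEquiv,
        Fin.removeNth]
      rw [Fin.sum_univ_succ, Fin.prod_univ_succ]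
      simp [Fin.succAbove_zero, add_assoc, Fin.tail]
    have step2 : ∫⁻ p, G p ∂((volume : Measure E2).prod (Measure.pi fun _ : Fin m => volume))
        = ∫⁻ z : E2, ∫⁻ y : Fin m → E2, G (z, y) := by
      rw [lintegral_prod _ hGmeas.aemeasurable]
      rw [volume_pi]
    have step3 : ∀ z : E2, ∫⁻ y : Fin m → E2, G (z, y) ≤ wgt 2 z * (C * wgt b' (η + z)) := by
      intro z
      have hpt : ∀ y : Fin m → E2, G (z, y)
          = wgt 2 z * (wgt b ((η + z) + ∑ j, y j) * ∏ j, wgt 2 (y j)) := by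
        intro y
        simp only [hGdef]
        ring
      rw [lintegral_congr hpt, lintegral_const_mul _ ?hm]
      case hm =>
        exact ((wgt_meas b).comp (measurable_const.add (msum_meas m))).mul (mprod_meas m 2)
      exact mul_le_mul' le_rfl (hIH (η + z))
    calc ∫⁻ ξ : Fin (m+1) → E2, wgt b (η + ∑ ℓ, ξ ℓ) * ∏ ℓ, wgt 2 (ξ ℓ)
        = ∫⁻ z : E2, ∫⁻ y : Fin m → E2, G (z, y) := by rw [step1, step2]
      _ ≤ ∫⁻ z : E2, wgt 2 z * (C * wgt b' (η + z)) := lintegral_mono step3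
      _ = C * ∫⁻ z : E2, wgt 2 z * wgt b' (η + z) := by
          rw [← lintegral_const_mul _ ?hm2]
          case hm2 =>
            exact (wgt_meas 2).mul ((wgt_meas b').comp (measurable_const.add measurable_id))
          congr 1
          ext z
          ring
      _ ≤ C * ∫⁻ z : E2, wgt α z * wgt b' (η + z) := by
          apply mul_le_mul' le_rfl
          apply lintegral_mono
          intro z
          exact mul_le_mul' (wgt_mono (by linarith) z) le_rfl
      _ ≤ C * (Cc * ENNReal.ofReal ((1 + ‖η‖) ^ (2 - (α + b')))) :=
          mul_le_mul' le_rfl (hconv η)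
      _ = C * Cc * wgt (b'/2) η := by
          rw [wgt, show (2:ℝ) - (α + b') = -(b'/2) by simp only [hαdef]; ring]
          ring

/-- for `ε > 0` and `k ≥ 1` there is `C = C(ε,k)` such that, uniformly in `N`,
`∫_{Γ_{k,N}} ⟨ξ₁+⋯+ξ_k⟩^{−ε} ∏_ℓ ⟨ξ_ℓ⟩^{−2} dξ ≤ C`, where
`Γ_{k,N} = {(ξ₁,…,ξ_k) ∈ (ℝ²)^k : |ξ_ℓ| ≤ N for all ℓ}` and `⟨ξ⟩ = (1+|ξ|²)^{1/2}`. -/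
theorem convolution_integral_uniform_bound (ε : ℝ) (hε : 0 < ε) (k : ℕ) (hk : 1 ≤ k) :
    ∃ C : ℝ, 0 < C ∧ ∀ N : ℝ,
      (∫ ξ in {ξ : Fin k → EuclideanSpace ℝ (Fin 2) | ∀ ℓ, ‖ξ ℓ‖ ≤ N},
          (1 + ‖∑ ℓ, ξ ℓ‖ ^ 2) ^ (-ε / 2) * ∏ ℓ, (1 + ‖ξ ℓ‖ ^ 2)⁻¹)
        ≤ C := by
  set b : ℝ := min ε 1 with hbdef
  have hb0 : 0 < b := lt_min hε one_pos
  have hb2 : b < 2 := lt_of_le_of_lt (min_le_right _ _) one_lt_two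
  have hbε : b ≤ ε := min_le_left _ _
  obtain ⟨b', hb'0, hb'2, C0, hC0, hbound⟩ := multi_est k b hb0 hb2
  set f : (Fin k → E2) → ℝ := fun ξ =>
    (1 + ‖∑ ℓ, ξ ℓ‖ ^ 2) ^ (-ε / 2) * ∏ ℓ, (1 + ‖ξ ℓ‖ ^ 2)⁻¹ with hfdef
  have hf_nonneg : ∀ ξ, 0 ≤ f ξ := by
    intro ξ
    apply mul_nonneg
    · positivity
    · apply Finset.prod_nonneg
      intro ℓ _
      positivity
  have hsum_cont : Continuous fun ξ : Fin k → E2 => ∑ ℓ, ξ ℓ :=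
    continuous_finset_sum _ (fun i _ => continuous_apply i)
  have hf_cont : Continuous f := by
    apply Continuous.mul
    · apply Continuous.rpow_const
      · exact continuous_const.add ((hsum_cont.norm).pow 2)
      · intro x; left; positivity
    · apply continuous_finset_prod
      intro i _
      apply Continuous.inv₀
      · exact continuous_const.add (((continuous_apply i).norm).pow 2)
      · intro x; positivity
  -- pointwise domination in ℝ≥0∞
  have hpt : ∀ ξ : Fin k → E2, ENNReal.ofReal (f ξ)
      ≤ ENNReal.ofReal (2 ^ (b/2) * 2 ^ k)
        * (wgt b (∑ ℓ, ξ ℓ) * ∏ ℓ, wgt 2 (ξ ℓ)) := by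
    intro ξ
    set s : E2 := ∑ ℓ, ξ ℓ with hsdef
    have h1 : ENNReal.ofReal ((1 + ‖s‖ ^ 2) ^ (-ε / 2))
        ≤ ENNReal.ofReal (2 ^ (b/2)) * wgt b s := by
      rw [wgt, ← ENNReal.ofReal_mul (by positivity)]
      apply ENNReal.ofReal_le_ofReal
      calc (1 + ‖s‖ ^ 2) ^ (-ε / 2) ≤ (1 + ‖s‖ ^ 2) ^ (-b / 2) := by
            apply Real.rpow_le_rpow_of_exponent_le
            · have := sq_nonneg ‖s‖
              have h2 : (0:ℝ) ≤ ‖s‖ ^ 2 := by positivity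
              linarith
            · linarith
        _ ≤ 2 ^ (b/2) * (1 + ‖s‖) ^ (-b) := rpow_neg_one_add_norm_sq_le s hb0
    have h2 : ∀ x : E2, ENNReal.ofReal ((1 + ‖x‖ ^ 2)⁻¹)
        ≤ ENNReal.ofReal 2 * wgt 2 x := by
      intro x
      rw [wgt, ← ENNReal.ofReal_mul (by norm_num)]
      apply ENNReal.ofReal_le_ofReal
      have hrw : (1 + ‖x‖) ^ (-(2:ℝ)) = ((1 + ‖x‖) ^ (2:ℕ))⁻¹ := by
        rw [Real.rpow_neg (by positivity)]
        norm_num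
      rw [hrw]
      have ha' : (0:ℝ) < 1 + ‖x‖ ^ 2 := by positivity
      have hb2' : (0:ℝ) < (1 + ‖x‖) ^ (2:ℕ) := by positivity
      have key : ((1:ℝ) + ‖x‖) ^ (2:ℕ) ≤ 2 * (1 + ‖x‖ ^ 2) := by
        nlinarith [sq_nonneg (1 - ‖x‖), norm_nonneg x]
      rw [← one_div, show (2:ℝ) * (((1 + ‖x‖) ^ (2:ℕ))⁻¹) = 2 / ((1 + ‖x‖) ^ (2:ℕ))
          from (div_eq_mul_inv _ _).symm, div_le_div_iff₀ ha' hb2']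
      linarith
    have hsplit : ENNReal.ofReal (f ξ)
        = ENNReal.ofReal ((1 + ‖s‖ ^ 2) ^ (-ε / 2))
          * ∏ ℓ, ENNReal.ofReal ((1 + ‖ξ ℓ‖ ^ 2)⁻¹) := by
      rw [hfdef]
      rw [ENNReal.ofReal_mul (by positivity)]
      congr 1
      rw [← ENNReal.ofReal_prod_of_nonneg]
      intro ℓ _
      positivity
    rw [hsplit]
    calc ENNReal.ofReal ((1 + ‖s‖ ^ 2) ^ (-ε / 2)) * ∏ ℓ, ENNReal.ofReal ((1 + ‖ξ ℓ‖ ^ 2)⁻¹)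
        ≤ (ENNReal.ofReal (2 ^ (b/2)) * wgt b s) * ∏ ℓ, (ENNReal.ofReal 2 * wgt 2 (ξ ℓ)) := by
          apply mul_le_mul' h1
          exact Finset.prod_le_prod' (fun ℓ _ => h2 (ξ ℓ))
      _ = ENNReal.ofReal (2 ^ (b/2) * 2 ^ k) * (wgt b s * ∏ ℓ, wgt 2 (ξ ℓ)) := by
          rw [Finset.prod_mul_distrib, Finset.prod_const, Finset.card_univ, Fintype.card_fin,
            ENNReal.ofReal_mul (by positivity), ENNReal.ofReal_pow (by norm_num)]
          ring
  -- global lintegral bound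
  have hglobal : ∫⁻ ξ : Fin k → E2, wgt b (∑ ℓ, ξ ℓ) * ∏ ℓ, wgt 2 (ξ ℓ) ≤ C0 := by
    have := hbound 0
    have heq : ∀ ξ : Fin k → E2,
        wgt b ((0:E2) + ∑ ℓ, ξ ℓ) * ∏ ℓ, wgt 2 (ξ ℓ)
          = wgt b (∑ ℓ, ξ ℓ) * ∏ ℓ, wgt 2 (ξ ℓ) := by
      intro ξ; rw [zero_add]
    rw [lintegral_congr heq] at this
    refine this.trans ?_
    have : wgt b' 0 = 1 := by
      rw [wgt]
      simp [Real.one_rpow]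
    rw [this, mul_one]
  set L : ℝ≥0∞ := ENNReal.ofReal (2 ^ (b/2) * 2 ^ k) * C0 with hLdef
  have hL : L < ⊤ := ENNReal.mul_lt_top ENNReal.ofReal_lt_top hC0
  refine ⟨L.toReal + 1, by positivity, ?_⟩
  intro N
  set S : Set (Fin k → E2) := {ξ | ∀ ℓ, ‖ξ ℓ‖ ≤ N} with hSdef
  have hintS : ∫⁻ ξ in S, ENNReal.ofReal (f ξ) ≤ L := by
    calc ∫⁻ ξ in S, ENNReal.ofReal (f ξ)
        ≤ ∫⁻ ξ : Fin k → E2, ENNReal.ofReal (f ξ) :=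
          lintegral_mono' Measure.restrict_le_self le_rfl
      _ ≤ ∫⁻ ξ : Fin k → E2, ENNReal.ofReal (2 ^ (b/2) * 2 ^ k)
            * (wgt b (∑ ℓ, ξ ℓ) * ∏ ℓ, wgt 2 (ξ ℓ)) := lintegral_mono hpt
      _ = ENNReal.ofReal (2 ^ (b/2) * 2 ^ k)
            * ∫⁻ ξ : Fin k → E2, wgt b (∑ ℓ, ξ ℓ) * ∏ ℓ, wgt 2 (ξ ℓ) := by
          apply lintegral_const_mul
          exact ((wgt_meas b).comp (msum_meas k)).mul (mprod_meas k 2)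
      _ ≤ ENNReal.ofReal (2 ^ (b/2) * 2 ^ k) * C0 := mul_le_mul' le_rfl hglobal
  have hieq : ∫ ξ in S, f ξ = (∫⁻ ξ in S, ENNReal.ofReal (f ξ)).toReal := by
    apply integral_eq_lintegral_of_nonneg_ae
    · exact Filter.Eventually.of_forall hf_nonneg
    · exact hf_cont.aestronglyMeasurable.restrict
  calc ∫ ξ in S, f ξ = (∫⁻ ξ in S, ENNReal.ofReal (f ξ)).toReal := hieq
    _ ≤ L.toReal := ENNReal.toReal_mono hL.ne hintS
    _ ≤ L.toReal + 1 := by linarith
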